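/- Let a_1 > a_2 > ... > a_k ≥ 1 be integers, let r_1, ..., r_k be positive integers, and let G = S_{(a_1^{r_1}, ..., a_k^{r_k})} be the corresponding banana star. Then sn(G) = max over 1 ≤ ℓ ≤ k of min{ a_ℓ, 1 + Σ_{i=1}^{ℓ} r_i }. -/

import Mathlib

open Finset

attribute [local instance] Classical.propDecidable

noncomputable section

/-- A finite loopless multigraph on vertex type `V`, given by a symmetric
edge-multiplicity function: `mul u v` is the number of edges joining `u` and `v`. -/
structure Multigraph (V : Type) [Fintype V] where
  mul : V → V → ℕ
  symm : ∀ u v, mul u v = mul v u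
  loopless : ∀ v, mul v v = 0

namespace Multigraph

variable {V : Type} [Fintype V]

/-- The underlying simple graph of a multigraph. -/
def underlying (G : Multigraph V) : SimpleGraph V where
  Adj u v := 0 < G.mul u v
  symm := by
    constructor
    intro u v h
    rwa [G.symm] at h
  loopless := by
    constructor
    intro v h
    simp [G.loopless] at h

/-- A multigraph is connected if its underlying simple graph is. -/
def Connected (G : Multigraph V) : Prop := G.underlying.Connected

/-- A banana tree is a multigraph whose underlying simple graph is a tree. -/
def IsBananaTree (G : Multigraph V) : Prop := G.underlying.IsTree

/-- The valence (degree) of a vertex. -/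
def valence (G : Multigraph V) (v : V) : ℕ := ∑ w, G.mul v w

/-- The number of edges of a multigraph. -/
def edgeCount (G : Multigraph V) : ℕ := (∑ u, ∑ v, G.mul u v) / 2

/-- The genus (first Betti number) `|E| - |V| + 1` of a connected multigraph. -/
def genus (G : Multigraph V) : ℕ := G.edgeCount + 1 - Fintype.card V

/-- The degree of a divisor: the total number of chips. -/
def degree (D : V → ℤ) : ℤ := ∑ v, D v

/-- A divisor is effective if it is nonnegative everywhere. -/
def Effective (D : V → ℤ) : Prop := ∀ v, 0 ≤ D v

/-- Linear equivalence of divisors: `D'` is obtained from `D` by a finite sequence of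
chip-firing moves, equivalently (for connected graphs) via an integral firing script `σ`. -/
def LinEquiv (G : Multigraph V) (D D' : V → ℤ) : Prop :=
  ∃ σ : V → ℤ, ∀ v, D' v = D v + ∑ w, (G.mul v w : ℤ) * (σ w - σ v)

/-- A divisor has positive rank if for every vertex `v` it is linearly equivalent to an
effective divisor placing at least one chip on `v`. -/
def PosRank (G : Multigraph V) (D : V → ℤ) : Prop :=
  ∀ v, ∃ D', G.LinEquiv D D' ∧ Effective D' ∧ 1 ≤ D' v

/-- The (divisorial) gonality: the minimum degree of a positive-rank effective divisor. -/
def gonality (G : Multigraph V) : ℕ :=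
  sInf {d : ℕ | ∃ D : V → ℤ, Effective D ∧ G.PosRank D ∧ degree D = (d : ℤ)}

/-- `f(G, v, k)`: the minimum degree of an effective divisor `D` on `G` such that
`D + k·v` has positive rank. -/
def fmin (G : Multigraph V) (v : V) (k : ℕ) : ℕ :=
  sInf {d : ℕ | ∃ D : V → ℤ, Effective D ∧
    G.PosRank (fun u => D u + if u = v then (k : ℤ) else 0) ∧ degree D = (d : ℤ)}

/-- Delete a vertex from a multigraph. -/
def deleteVertex (G : Multigraph V) (v : V) : Multigraph {u : V // u ≠ v} where
  mul a b := G.mul a.1 b.1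
  symm := fun a b => G.symm a.1 b.1
  loopless := fun a => G.loopless a.1

/-- Delete one single edge between `u` and `w` (if any) from a multigraph. -/
def deleteOneEdge (G : Multigraph V) (u w : V) : Multigraph V where
  mul x y := if (x = u ∧ y = w) ∨ (x = w ∧ y = u) then G.mul x y - 1 else G.mul x y
  symm := by
    intro x y
    by_cases h : (x = u ∧ y = w) ∨ (x = w ∧ y = u)
    · have h' : (y = u ∧ x = w) ∨ (y = w ∧ x = u) := by tauto
      simp [h, h', G.symm x y]
    · have h' : ¬((y = u ∧ x = w) ∨ (y = w ∧ x = u)) := by tauto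
      simp [h, h', G.symm x y]
  loopless := by
    intro v
    by_cases h : (v = u ∧ v = w) ∨ (v = w ∧ v = u)
    · simp [h, G.loopless]
    · simp [h, G.loopless]

/-- The adjacency move from `v` to `w` on a banana tree: the subset-firing move at the
connected component of `v` after removing the `v`-`w` edge bunch.  Its net effect is to
move `|E(v,w)|` chips from `v` to `w`. -/
def adjMove (G : Multigraph V) (v w : V) (D : V → ℤ) : V → ℤ :=
  fun u => if u = v then D u - (G.mul v w : ℤ)
    else if u = w then D u + (G.mul v w : ℤ) else D u

/-- A single legal adjacency move: both divisors are effective and the second is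
obtained from the first by an adjacency move between adjacent vertices. -/
def LegalAdjStep (G : Multigraph V) (D D' : V → ℤ) : Prop :=
  ∃ v w, G.underlying.Adj v w ∧ Effective D ∧ Effective D' ∧ D' = G.adjMove v w D

/-- A scramble: a collection of nonempty vertex sets (eggs), each inducing a connected
subgraph. -/
def IsScramble (G : Multigraph V) (S : Finset (Finset V)) : Prop :=
  ∀ X ∈ S, X.Nonempty ∧ (G.underlying.induce (X : Set V)).Connected

/-- A hitting set of a scramble: a set of vertices meeting every egg. -/
def IsHittingSet (S : Finset (Finset V)) (T : Finset V) : Prop :=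
  ∀ X ∈ S, (X ∩ T).Nonempty

/-- The hitting number of a scramble. -/
def hittingNumber (S : Finset (Finset V)) : ℕ∞ :=
  sInf {t : ℕ∞ | ∃ T : Finset V, IsHittingSet S T ∧ (T.card : ℕ∞) = t}

/-- The simple graph remaining after removing `c u w` of the edges of each bunch. -/
def cutGraph (G : Multigraph V) (c : V → V → ℕ) : SimpleGraph V where
  Adj u w := u ≠ w ∧ c u w < G.mul u w ∧ c w u < G.mul w u
  symm := ⟨fun u w h => ⟨h.1.symm, h.2.2, h.2.1⟩⟩
  loopless := ⟨fun u h => h.1 rfl⟩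

/-- `c` describes an egg-cut of the scramble `S`: a set of edges of `G` (given by the
number `c u w` of edges removed from each bunch) whose removal leaves at least two
connected components each completely containing an egg. -/
def IsEggCut (G : Multigraph V) (S : Finset (Finset V)) (c : V → V → ℕ) : Prop :=
  (∀ u w, c u w = c w u) ∧ (∀ u w, c u w ≤ G.mul u w) ∧
  ∃ X₁ ∈ S, ∃ X₂ ∈ S,
    (∀ x ∈ X₁, ∀ y ∈ X₁, (G.cutGraph c).Reachable x y) ∧
    (∀ x ∈ X₂, ∀ y ∈ X₂, (G.cutGraph c).Reachable x y) ∧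
    (∀ x ∈ X₁, ∀ y ∈ X₂, ¬ (G.cutGraph c).Reachable x y)

/-- The egg-cut number of a scramble (`⊤` if no egg-cut exists). -/
def eggCutNumber (G : Multigraph V) (S : Finset (Finset V)) : ℕ∞ :=
  sInf {t : ℕ∞ | ∃ c : V → V → ℕ, G.IsEggCut S c ∧
    ((∑ u, ∑ w, c u w : ℕ) : ℕ∞) = 2 * t}

/-- The order of a scramble: the minimum of its hitting number and egg-cut number. -/
def scrambleOrder (G : Multigraph V) (S : Finset (Finset V)) : ℕ∞ :=
  min (hittingNumber S) (G.eggCutNumber S)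

/-- The scramble number of a multigraph: the maximum order of a scramble on it. -/
def scrambleNumber (G : Multigraph V) : ℕ∞ :=
  sSup {m : ℕ∞ | ∃ S : Finset (Finset V), G.IsScramble S ∧ G.scrambleOrder S = m}

/-- The weight of a node `t` in a tree-cut decomposition `(T, X)`: the number of vertices
mapped to `t` plus the number of edges routed through `t` with neither endpoint mapped
to `t`. -/
def nodeWeight (G : Multigraph V) {N : Type} [Fintype N] (T : SimpleGraph N)
    (X : V → N) (t : N) : ℕ :=
  (Finset.univ.filter fun v => X v = t).card +
    (∑ u, ∑ w, if X u ≠ t ∧ X w ≠ t ∧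
        ¬ (T.deleteEdges {e | t ∈ e}).Reachable (X u) (X w)
      then G.mul u w else 0) / 2

/-- The weight of a link `pq` in a tree-cut decomposition `(T, X)`: the number of edges
of `G` routed through that link. -/
def linkWeight (G : Multigraph V) {N : Type} (T : SimpleGraph N)
    (X : V → N) (p q : N) : ℕ :=
  (∑ u, ∑ w, if ¬ (T.deleteEdges {s(p, q)}).Reachable (X u) (X w)
    then G.mul u w else 0) / 2

/-- The width of a tree-cut decomposition `(T, X)`: the maximum of all node and link
weights. -/
def tcdWidth (G : Multigraph V) {N : Type} [Fintype N] (T : SimpleGraph N)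
    (X : V → N) : ℕ :=
  max (Finset.univ.sup fun t => G.nodeWeight T X t)
      (Finset.univ.sup fun p : N × N =>
        if T.Adj p.1 p.2 then G.linkWeight T X p.1 p.2 else 0)

/-- The screewidth of a multigraph: the minimum width of a tree-cut decomposition. -/
def screewidth (G : Multigraph V) : ℕ :=
  sInf {w : ℕ | ∃ (m : ℕ) (T : SimpleGraph (Fin m)), T.IsTree ∧
    ∃ X : V → Fin m, G.tcdWidth T X = w}

/-- The banana path on `n+1` vertices `v_0, …, v_n`, with `a i` edges joining
`v_i` and `v_{i+1}` (for `0 ≤ i < n`). -/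
def bananaPath (n : ℕ) (a : ℕ → ℕ) : Multigraph (Fin (n + 1)) where
  mul i j := if i.val + 1 = j.val then a i.val else if j.val + 1 = i.val then a j.val else 0
  symm := by
    intro u v
    split_ifs <;> first | rfl | (exfalso; omega)
  loopless := by
    intro v
    have h : ¬ (v.val + 1 = v.val) := by omega
    simp [h]

/-- The banana star with central vertex `Sum.inl ()` and, for each `i : Fin k`,
`r i` leaves joined to the center by `a i` parallel edges. -/
def bananaStar (k : ℕ) (a r : Fin k → ℕ) :
    Multigraph (Unit ⊕ (Σ i : Fin k, Fin (r i))) where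
  mul x y :=
    match x, y with
    | Sum.inl _, Sum.inr ⟨i, _⟩ => a i
    | Sum.inr ⟨i, _⟩, Sum.inl _ => a i
    | _, _ => 0
  symm := by
    intro u v
    rcases u with u | ⟨i, li⟩ <;> rcases v with v | ⟨j, lj⟩ <;> rfl
  loopless := by
    intro v
    rcases v with v | ⟨i, li⟩ <;> rfl

end Multigraph

section Aux
open Multigraph SimpleGraph

lemma reach_eq_of_isolated {W : Type*} {G' : SimpleGraph W} {v : W}
    (h : ∀ y, ¬ G'.Adj v y) {y : W} (hr : G'.Reachable v y) : y = v := by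
  obtain ⟨p⟩ := hr
  cases p with
  | nil => rfl
  | cons h' _ => exact absurd h' (h _)

variable {k : ℕ} {a r : Fin k → ℕ}

lemma bs_mul_inl_inr (w : Σ i : Fin k, Fin (r i)) :
    (bananaStar k a r).mul (Sum.inl ()) (Sum.inr w) = a w.1 := by
  rcases w with ⟨i, j⟩; rfl

lemma bs_mul_inr_inl (w : Σ i : Fin k, Fin (r i)) :
    (bananaStar k a r).mul (Sum.inr w) (Sum.inl ()) = a w.1 := by
  rcases w with ⟨i, j⟩; rfl

lemma bs_mul_inr_inr (w z : Σ i : Fin k, Fin (r i)) :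
    (bananaStar k a r).mul (Sum.inr w) (Sum.inr z) = 0 := by
  rcases w with ⟨i, j⟩; rcases z with ⟨i', j'⟩; rfl

lemma bs_adj_inr_inl (ha : ∀ i, 1 ≤ a i) (w : Σ i : Fin k, Fin (r i)) :
    (bananaStar k a r).underlying.Adj (Sum.inr w) (Sum.inl ()) := by
  show 0 < (bananaStar k a r).mul _ _
  rw [bs_mul_inr_inl]; exact ha _

lemma induce_center_connected (ha : ∀ i, 1 ≤ a i)
    (X : Finset (Unit ⊕ Σ i : Fin k, Fin (r i))) (hc : Sum.inl () ∈ X) :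
    ((bananaStar k a r).underlying.induce (X : Set _)).Connected := by
  rw [SimpleGraph.connected_iff]
  have hcs : (Sum.inl () : Unit ⊕ Σ i : Fin k, Fin (r i)) ∈ (X : Set _) := hc
  have key : ∀ u : (X : Set (Unit ⊕ Σ i : Fin k, Fin (r i))),
      ((bananaStar k a r).underlying.induce (X : Set _)).Reachable u ⟨_, hcs⟩ := by
    rintro ⟨u, hu⟩
    rcases u with u | w
    · cases u; exact Reachable.refl _
    · exact Adj.reachable (bs_adj_inr_inl ha w)
  exact ⟨fun u v => (key u).trans (key v).symm, ⟨⟨_, hcs⟩⟩⟩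

lemma egg_structure (X : Finset (Unit ⊕ Σ i : Fin k, Fin (r i))) (hne : X.Nonempty)
    (hconn : ((bananaStar k a r).underlying.induce (X : Set _)).Connected)
    (hc : Sum.inl () ∉ X) : ∃ w, X = {Sum.inr w} := by
  obtain ⟨x, hx⟩ := hne
  have hedgeless : ∀ u : (X : Set (Unit ⊕ Σ i : Fin k, Fin (r i))), ∀ v,
      ¬ ((bananaStar k a r).underlying.induce (X : Set _)).Adj u v := by
    rintro ⟨u, hu⟩ ⟨v, hv⟩ hadj
    have h2 : (bananaStar k a r).underlying.Adj u v := hadj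
    rcases u with u | u
    · cases u; exact hc hu
    · rcases v with v | v
      · cases v; exact hc hv
      · have h3 : 0 < (bananaStar k a r).mul (Sum.inr u) (Sum.inr v) := h2
        rw [bs_mul_inr_inr] at h3
        exact absurd h3 (lt_irrefl 0)
  have huniq : ∀ y ∈ X, y = x := by
    intro y hy
    have hreach := hconn.preconnected ⟨y, hy⟩ ⟨x, hx⟩
    have := reach_eq_of_isolated (hedgeless ⟨y, hy⟩) hreach
    exact (Subtype.ext_iff.mp this).symm
  have hX : X = {x} := Finset.eq_singleton_iff_unique_mem.mpr ⟨hx, huniq⟩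
  rcases x with u | w
  · cases u; exact absurd hx hc
  · exact ⟨w, hX⟩

end Aux

section Aux2
open Multigraph SimpleGraph

lemma singleton_induce_connected {W : Type*} (G' : SimpleGraph W) (x : W) :
    (G'.induce ({x} : Set W)).Connected := by
  rw [SimpleGraph.connected_iff]
  refine ⟨?_, ⟨⟨x, rfl⟩⟩⟩
  rintro ⟨u, hu⟩ ⟨v, hv⟩
  simp only [Set.mem_singleton_iff] at hu hv
  subst hu; subst hv
  exact SimpleGraph.Reachable.refl _

lemma two_entries_le_sum {W : Type*} [Fintype W] (c : W → W → ℕ) {x y : W} (hxy : x ≠ y) :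
    c x y + c y x ≤ ∑ u, ∑ w, c u w := by
  calc c x y + c y x
      ≤ (∑ w, c x w) + (∑ w, c y w) :=
        add_le_add (Finset.single_le_sum (fun _ _ => Nat.zero_le _) (mem_univ y))
          (Finset.single_le_sum (fun _ _ => Nat.zero_le _) (mem_univ x))
    _ = ∑ u ∈ ({x, y} : Finset W), ∑ w, c u w := by rw [Finset.sum_pair hxy]
    _ ≤ ∑ u, ∑ w, c u w := Finset.sum_le_sum_of_subset (Finset.subset_univ _)

lemma sum_two_ifs {W : Type*} [Fintype W] (A B : W) (C : ℕ) :
    (∑ u, ∑ v, if u = A ∧ v = B then C else 0) = C := by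
  rw [Finset.sum_eq_single A]
  · simp
  · intro b _ hb; simp [hb]
  · simp

lemma card_filter_sigma {k : ℕ} (r : Fin k → ℕ) (ℓ : Fin k) :
    (univ.filter (fun p : Σ i : Fin k, Fin (r i) => p.1 ≤ ℓ)).card
      = ∑ i : Fin k, if i ≤ ℓ then r i else 0 := by
  rw [Finset.card_filter, ← Finset.univ_sigma_univ, Finset.sum_sigma]
  refine Finset.sum_congr rfl ?_
  intro i _
  by_cases h : i ≤ ℓ <;> simp [h]

lemma hit_of_forall {α : Type} [Fintype α] {S : Finset (Finset α)} {T : Finset α}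
    (h : ∀ X ∈ S, ∃ x, x ∈ X ∧ x ∈ T) : Multigraph.IsHittingSet S T := by
  intro X hX
  obtain ⟨x, hx1, hx2⟩ := h X hX
  exact ⟨x, Finset.mem_inter.mpr ⟨hx1, hx2⟩⟩

lemma hit_elim {α : Type} [Fintype α] {S : Finset (Finset α)} {T : Finset α}
    (h : Multigraph.IsHittingSet S T) : ∀ X ∈ S, ∃ x, x ∈ X ∧ x ∈ T := by
  intro X hX
  obtain ⟨x, hx⟩ := h X hX
  exact ⟨x, Finset.mem_inter.mp hx⟩

variable {k : ℕ} {a r : Fin k → ℕ}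

lemma hit_le {S : Finset (Finset (Unit ⊕ Σ i : Fin k, Fin (r i)))}
    {T : Finset (Unit ⊕ Σ i : Fin k, Fin (r i))} (hT : Multigraph.IsHittingSet S T) :
    Multigraph.hittingNumber S ≤ (T.card : ℕ∞) :=
  sInf_le ⟨T, hT, rfl⟩

lemma one_le_M (hk : 0 < k) (ha : ∀ i, 1 ≤ a i) :
    (1 : ℕ∞) ≤ ((univ.sup fun ℓ : Fin k =>
        min (a ℓ) (1 + ∑ i : Fin k, if i ≤ ℓ then r i else 0) : ℕ) : ℕ∞) := by
  have h1 : 1 ≤ univ.sup fun ℓ : Fin k =>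
      min (a ℓ) (1 + ∑ i : Fin k, if i ≤ ℓ then r i else 0) := by
    refine le_trans ?_ (Finset.le_sup (mem_univ ⟨0, hk⟩))
    exact le_min (ha _) (Nat.le_add_right 1 _)
  exact_mod_cast h1

lemma order_le_M (hk : 0 < k) (ha : ∀ i, 1 ≤ a i)
    (S : Finset (Finset (Unit ⊕ Σ i : Fin k, Fin (r i))))
    (hS : (bananaStar k a r).IsScramble S) :
    (bananaStar k a r).scrambleOrder S ≤
      ((univ.sup fun ℓ : Fin k =>
        min (a ℓ) (1 + ∑ i : Fin k, if i ≤ ℓ then r i else 0) : ℕ) : ℕ∞) := by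
  classical
  set G := bananaStar k a r with hG
  set M : ℕ∞ := ((univ.sup fun ℓ : Fin k =>
        min (a ℓ) (1 + ∑ i : Fin k, if i ≤ ℓ then r i else 0) : ℕ) : ℕ∞) with hM
  set L : Finset (Σ i : Fin k, Fin (r i)) :=
    univ.filter (fun w => ({Sum.inr w} : Finset (Unit ⊕ Σ i : Fin k, Fin (r i))) ∈ S) with hL
  have horder_hit : G.scrambleOrder S ≤ Multigraph.hittingNumber S := min_le_left _ _
  by_cases hLe : L = ∅
  · have hT : Multigraph.IsHittingSet S
        ({Sum.inl ()} : Finset (Unit ⊕ Σ i : Fin k, Fin (r i))) := by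
      refine hit_of_forall ?_
      intro X hX
      obtain ⟨hne, hconn⟩ := hS X hX
      by_cases hc : Sum.inl () ∈ X
      · exact ⟨Sum.inl (), hc, Finset.mem_singleton_self _⟩
      · obtain ⟨w, rfl⟩ := egg_structure X hne hconn hc
        have : w ∈ L := Finset.mem_filter.mpr ⟨mem_univ _, hX⟩
        rw [hLe] at this
        exact absurd this (Finset.notMem_empty _)
    calc G.scrambleOrder S ≤ Multigraph.hittingNumber S := horder_hit
      _ ≤ (({Sum.inl ()} : Finset (Unit ⊕ Σ i : Fin k, Fin (r i))).card : ℕ∞) := hit_le hT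
      _ ≤ M := by rw [Finset.card_singleton]; exact one_le_M hk ha
  · have hLne : L.Nonempty := Finset.nonempty_iff_ne_empty.mpr hLe
    set j : Fin k := (L.image Sigma.fst).max' (hLne.image _) with hj
    have hjmem : j ∈ L.image Sigma.fst := Finset.max'_mem _ _
    obtain ⟨w₀, hw₀L, hw₀1⟩ := Finset.mem_image.mp hjmem
    have hbound : ∀ w ∈ L, w.1 ≤ j := fun w hw =>
      Finset.le_max' _ _ (Finset.mem_image_of_mem _ hw)
    have hw₀S : ({Sum.inr w₀} : Finset (Unit ⊕ Σ i : Fin k, Fin (r i))) ∈ S :=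
      (Finset.mem_filter.mp hw₀L).2
    by_cases hall : ∀ Y ∈ S, (Sum.inr w₀ : Unit ⊕ Σ i : Fin k, Fin (r i)) ∈ Y
    · have hT : Multigraph.IsHittingSet S
          ({Sum.inr w₀} : Finset (Unit ⊕ Σ i : Fin k, Fin (r i))) :=
        hit_of_forall fun X hX => ⟨Sum.inr w₀, hall X hX, Finset.mem_singleton_self _⟩
      calc G.scrambleOrder S ≤ Multigraph.hittingNumber S := horder_hit
        _ ≤ (({Sum.inr w₀} : Finset (Unit ⊕ Σ i : Fin k, Fin (r i))).card : ℕ∞) := hit_le hT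
        _ ≤ M := by rw [Finset.card_singleton]; exact one_le_M hk ha
    · push_neg at hall
      obtain ⟨Y, hY, hYw⟩ := hall
      have hhit : Multigraph.hittingNumber S ≤
          ((1 + ∑ i : Fin k, if i ≤ j then r i else 0 : ℕ) : ℕ∞) := by
        have hT : Multigraph.IsHittingSet S
            (insert (Sum.inl () : Unit ⊕ Σ i : Fin k, Fin (r i))
              (L.image (Sum.inr : _ → Unit ⊕ Σ i : Fin k, Fin (r i)))) := by
          refine hit_of_forall ?_
          intro X hX
          obtain ⟨hne, hconn⟩ := hS X hX
          by_cases hc : Sum.inl () ∈ X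
          · exact ⟨Sum.inl (), hc, Finset.mem_insert_self _ _⟩
          · obtain ⟨w, rfl⟩ := egg_structure X hne hconn hc
            have hwL : w ∈ L := Finset.mem_filter.mpr ⟨mem_univ _, hX⟩
            exact ⟨Sum.inr w, Finset.mem_singleton_self _,
              Finset.mem_insert_of_mem (Finset.mem_image_of_mem _ hwL)⟩
        have hcard : (insert (Sum.inl () : Unit ⊕ Σ i : Fin k, Fin (r i))
            (L.image (Sum.inr : _ → Unit ⊕ Σ i : Fin k, Fin (r i)))).card
            ≤ 1 + ∑ i : Fin k, if i ≤ j then r i else 0 := by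
          refine le_trans (Finset.card_insert_le _ _) ?_
          rw [Finset.card_image_of_injective _ Sum.inr_injective]
          have hsub : L ⊆ univ.filter (fun p : Σ i : Fin k, Fin (r i) => p.1 ≤ j) :=
            fun w hw => Finset.mem_filter.mpr ⟨mem_univ _, hbound w hw⟩
          have := Finset.card_le_card hsub
          rw [card_filter_sigma] at this
          omega
        exact le_trans (hit_le hT) (by exact_mod_cast hcard)
      set c₀ : (Unit ⊕ Σ i : Fin k, Fin (r i)) → (Unit ⊕ Σ i : Fin k, Fin (r i)) → ℕ :=
        fun u v =>
        if (u = Sum.inl () ∧ v = Sum.inr w₀) ∨ (u = Sum.inr w₀ ∧ v = Sum.inl ())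
        then G.mul u v else 0 with hc₀
      have hc₀symm : ∀ u v, c₀ u v = c₀ v u := by
        intro u v
        simp only [hc₀]
        by_cases h : (u = Sum.inl () ∧ v = Sum.inr w₀) ∨ (u = Sum.inr w₀ ∧ v = Sum.inl ())
        · rw [if_pos h, if_pos (by tauto), G.symm]
        · rw [if_neg h, if_neg (by tauto)]
      have hc₀le : ∀ u v, c₀ u v ≤ G.mul u v := by
        intro u v
        simp only [hc₀]
        split_ifs
        · exact le_refl _
        · exact Nat.zero_le _
      have hc₀full : c₀ (Sum.inr w₀) (Sum.inl ()) = G.mul (Sum.inr w₀) (Sum.inl ()) := by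
        simp only [hc₀]
        exact if_pos (by tauto)
      have hc₀z : ∀ z : Σ i : Fin k, Fin (r i), z ≠ w₀ →
          c₀ (Sum.inr z) (Sum.inl ()) = 0 ∧ c₀ (Sum.inl ()) (Sum.inr z) = 0 := by
        intro z hz
        constructor
        · simp only [hc₀]
          refine if_neg ?_
          rintro (⟨h1, -⟩ | ⟨h1, -⟩)
          · exact absurd h1 (by simp)
          · exact hz (Sum.inr_injective h1)
        · simp only [hc₀]
          refine if_neg ?_
          rintro (⟨-, h2⟩ | ⟨h1, -⟩)
          · exact hz (Sum.inr_injective h2)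
          · exact absurd h1 (by simp)
      have hiso : ∀ y, ¬ (G.cutGraph c₀).Adj (Sum.inr w₀) y := by
        intro y hadj
        obtain ⟨hne', h1, h2⟩ : Sum.inr w₀ ≠ y ∧ c₀ (Sum.inr w₀) y < G.mul (Sum.inr w₀) y ∧
          c₀ y (Sum.inr w₀) < G.mul y (Sum.inr w₀) := hadj
        rcases y with u | z
        · cases u
          rw [hc₀full] at h1
          exact absurd h1 (lt_irrefl _)
        · rw [show G.mul (Sum.inr w₀) (Sum.inr z) = 0 from bs_mul_inr_inr w₀ z] at h1
          exact absurd h1 (Nat.not_lt_zero _)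
      have hadjc : ∀ z : Σ i : Fin k, Fin (r i), z ≠ w₀ →
          (G.cutGraph c₀).Adj (Sum.inr z) (Sum.inl ()) := by
        intro z hz
        obtain ⟨h0, h0'⟩ := hc₀z z hz
        refine (⟨by simp, ?_, ?_⟩ :
          (Sum.inr z : Unit ⊕ Σ i : Fin k, Fin (r i)) ≠ Sum.inl () ∧ _ ∧ _)
        · rw [h0]
          rw [show G.mul (Sum.inr z) (Sum.inl ()) = a z.1 from bs_mul_inr_inl z]
          exact ha _
        · rw [h0']
          rw [show G.mul (Sum.inl ()) (Sum.inr z) = a z.1 from bs_mul_inl_inr z]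
          exact ha _
      have hsum : ∑ u, ∑ v, c₀ u v = 2 * a w₀.1 := by
        have hone : ∀ (A B : Unit ⊕ Σ i : Fin k, Fin (r i)) (C : ℕ),
            (∑ u : Unit ⊕ Σ i : Fin k, Fin (r i), ∑ v : Unit ⊕ Σ i : Fin k, Fin (r i),
              if u = A ∧ v = B then C else 0) = C := by
          intro A B C
          rw [Finset.sum_eq_single A]
          · simp
          · intro b _ hb; simp [hb]
          · simp
        have hpt : ∀ u v, c₀ u v =
            (if u = Sum.inl () ∧ v = Sum.inr w₀ then a w₀.1 else 0) +
            (if u = Sum.inr w₀ ∧ v = Sum.inl () then a w₀.1 else 0) := by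
          intro u v
          simp only [hc₀]
          by_cases h1 : u = Sum.inl () ∧ v = Sum.inr w₀
          · obtain ⟨hu, hv⟩ := h1; subst hu; subst hv
            rw [if_pos (Or.inl ⟨rfl, rfl⟩), if_pos ⟨rfl, rfl⟩, if_neg (by simp),
              show G.mul (Sum.inl ()) (Sum.inr w₀) = a w₀.1 from bs_mul_inl_inr w₀]
            omega
          · by_cases h2 : u = Sum.inr w₀ ∧ v = Sum.inl ()
            · obtain ⟨hu, hv⟩ := h2; subst hu; subst hv
              rw [if_pos (Or.inr ⟨rfl, rfl⟩), if_neg (by simp), if_pos ⟨rfl, rfl⟩,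
                show G.mul (Sum.inr w₀) (Sum.inl ()) = a w₀.1 from bs_mul_inr_inl w₀]
              omega
            · rw [if_neg (by tauto), if_neg h1, if_neg h2]
        calc ∑ u, ∑ v, c₀ u v
            = ∑ u : Unit ⊕ Σ i : Fin k, Fin (r i), ∑ v : Unit ⊕ Σ i : Fin k, Fin (r i),
              ((if u = Sum.inl () ∧ v = Sum.inr w₀ then a w₀.1 else 0) +
              (if u = Sum.inr w₀ ∧ v = Sum.inl () then a w₀.1 else 0)) := by
              exact Finset.sum_congr rfl fun u _ => Finset.sum_congr rfl fun v _ => hpt u v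
          _ = (∑ u : Unit ⊕ Σ i : Fin k, Fin (r i), ∑ v : Unit ⊕ Σ i : Fin k, Fin (r i),
                if u = Sum.inl () ∧ v = Sum.inr w₀ then a w₀.1 else 0)
              + (∑ u : Unit ⊕ Σ i : Fin k, Fin (r i), ∑ v : Unit ⊕ Σ i : Fin k, Fin (r i),
                if u = Sum.inr w₀ ∧ v = Sum.inl () then a w₀.1 else 0) := by
              simp [Finset.sum_add_distrib]
          _ = 2 * a w₀.1 := by rw [hone, hone]; ring
      have hcut : G.eggCutNumber S ≤ ((a w₀.1 : ℕ) : ℕ∞) := by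
        apply sInf_le
        refine ⟨c₀, ⟨hc₀symm, hc₀le, {Sum.inr w₀}, hw₀S, Y, hY, ?_, ?_, ?_⟩, ?_⟩
        · intro x hx y hy
          simp only [Finset.mem_singleton] at hx hy
          subst hx; subst hy
          exact Reachable.refl _
        · obtain ⟨hne, hconn⟩ := hS Y hY
          by_cases hcY : Sum.inl () ∈ Y
          · have hrc : ∀ x ∈ Y, (G.cutGraph c₀).Reachable x (Sum.inl ()) := by
              intro x hx
              rcases x with u | z
              · cases u; exact Reachable.refl _
              · have hz : z ≠ w₀ := by rintro rfl; exact hYw hx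
                exact (hadjc z hz).reachable
            exact fun x hx y hy => (hrc x hx).trans (hrc y hy).symm
          · obtain ⟨w, rfl⟩ := egg_structure Y hne hconn hcY
            intro x hx y hy
            simp only [Finset.mem_singleton] at hx hy
            subst hx; subst hy
            exact Reachable.refl _
        · intro x hx y hy hreach
          simp only [Finset.mem_singleton] at hx
          subst hx
          have := reach_eq_of_isolated hiso hreach
          subst this
          exact hYw hy
        · rw [hsum]; push_cast; ring
      have hjM : ((min (a j) (1 + ∑ i : Fin k, if i ≤ j then r i else 0) : ℕ) : ℕ∞) ≤ M := by
        rw [hM]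
        have h1 : (fun ℓ : Fin k => min (a ℓ) (1 + ∑ i : Fin k, if i ≤ ℓ then r i else 0)) j
            ≤ univ.sup (fun ℓ : Fin k =>
              min (a ℓ) (1 + ∑ i : Fin k, if i ≤ ℓ then r i else 0)) :=
          Finset.le_sup (f := fun ℓ : Fin k =>
            min (a ℓ) (1 + ∑ i : Fin k, if i ≤ ℓ then r i else 0)) (mem_univ j)
        exact_mod_cast h1
      calc G.scrambleOrder S
          ≤ min ((1 + ∑ i : Fin k, if i ≤ j then r i else 0 : ℕ) : ℕ∞) ((a w₀.1 : ℕ) : ℕ∞) :=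
            min_le_min hhit hcut
        _ = ((min (a j) (1 + ∑ i : Fin k, if i ≤ j then r i else 0) : ℕ) : ℕ∞) := by
            rw [hw₀1, Nat.mono_cast.map_min, min_comm]
        _ ≤ M := hjM

end Aux2

section Aux3
open Multigraph SimpleGraph

variable {k : ℕ} {a r : Fin k → ℕ}

lemma scramble_S₀ (ℓ : Fin k) :
    (bananaStar k a r).IsScramble
      (insert ({Sum.inl ()} : Finset (Unit ⊕ Σ i : Fin k, Fin (r i)))
        ((univ.filter fun w : Σ i : Fin k, Fin (r i) => w.1 ≤ ℓ).image
          fun w => ({Sum.inr w} : Finset (Unit ⊕ Σ i : Fin k, Fin (r i))))) := by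
  intro X hX
  have h : X = {Sum.inl ()} ∨ ∃ w : Σ i : Fin k, Fin (r i), X = {Sum.inr w} := by
    rcases Finset.mem_insert.mp hX with h | h
    · exact Or.inl h
    · obtain ⟨w, _, rfl⟩ := Finset.mem_image.mp h
      exact Or.inr ⟨w, rfl⟩
  rcases h with rfl | ⟨w, rfl⟩
  · refine ⟨Finset.singleton_nonempty _, ?_⟩
    rw [Finset.coe_singleton]
    exact singleton_induce_connected _ _
  · refine ⟨Finset.singleton_nonempty _, ?_⟩
    rw [Finset.coe_singleton]
    exact singleton_induce_connected _ _

lemma lower_bound (hanti : StrictAnti a) (ha : ∀ i, 1 ≤ a i) (ℓ : Fin k) :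
    ((min (a ℓ) (1 + ∑ i : Fin k, if i ≤ ℓ then r i else 0) : ℕ) : ℕ∞) ≤
      (bananaStar k a r).scrambleOrder
        (insert ({Sum.inl ()} : Finset (Unit ⊕ Σ i : Fin k, Fin (r i)))
          ((univ.filter fun w : Σ i : Fin k, Fin (r i) => w.1 ≤ ℓ).image
            fun w => ({Sum.inr w} : Finset (Unit ⊕ Σ i : Fin k, Fin (r i))))) := by
  classical
  set S₀ : Finset (Finset (Unit ⊕ Σ i : Fin k, Fin (r i))) :=
    insert ({Sum.inl ()} : Finset (Unit ⊕ Σ i : Fin k, Fin (r i)))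
      ((univ.filter fun w : Σ i : Fin k, Fin (r i) => w.1 ≤ ℓ).image
        fun w => ({Sum.inr w} : Finset (Unit ⊕ Σ i : Fin k, Fin (r i)))) with hS₀def
  have hmem : ∀ X ∈ S₀, X = {Sum.inl ()} ∨
      ∃ w : Σ i : Fin k, Fin (r i), w.1 ≤ ℓ ∧ X = {Sum.inr w} := by
    intro X hX
    rcases Finset.mem_insert.mp hX with h | h
    · exact Or.inl h
    · obtain ⟨w, hw, rfl⟩ := Finset.mem_image.mp h
      exact Or.inr ⟨w, (Finset.mem_filter.mp hw).2, rfl⟩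
  rw [Multigraph.scrambleOrder]
  refine le_min ?_ ?_
  · -- hitting number side
    refine le_sInf ?_
    rintro t ⟨T, hT, rfl⟩
    have hforall := hit_elim hT
    set F : Finset (Unit ⊕ Σ i : Fin k, Fin (r i)) :=
      insert (Sum.inl ())
        ((univ.filter fun w : Σ i : Fin k, Fin (r i) => w.1 ≤ ℓ).image
          (Sum.inr : _ → Unit ⊕ Σ i : Fin k, Fin (r i))) with hF
    have hFT : F ⊆ T := by
      intro x hx
      rcases Finset.mem_insert.mp hx with rfl | hx'
      · obtain ⟨z, hz1, hz2⟩ := hforall {Sum.inl ()} (Finset.mem_insert_self _ _)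
        rw [Finset.mem_singleton] at hz1
        exact hz1 ▸ hz2
      · obtain ⟨w, hw, rfl⟩ := Finset.mem_image.mp hx'
        have hmem' : ({Sum.inr w} : Finset (Unit ⊕ Σ i : Fin k, Fin (r i))) ∈ S₀ := by
          rw [hS₀def]
          exact Finset.mem_insert_of_mem (Finset.mem_image_of_mem _ hw)
        obtain ⟨z, hz1, hz2⟩ := hforall _ hmem'
        rw [Finset.mem_singleton] at hz1
        exact hz1 ▸ hz2
    have hcardF : F.card = 1 + ∑ i : Fin k, if i ≤ ℓ then r i else 0 := by
      rw [hF, Finset.card_insert_of_notMem (by simp),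
        Finset.card_image_of_injective _ Sum.inr_injective, card_filter_sigma]
      omega
    have hfin : min (a ℓ) (1 + ∑ i : Fin k, if i ≤ ℓ then r i else 0) ≤ T.card := by
      have := Finset.card_le_card hFT
      rw [hcardF] at this
      exact le_trans (min_le_right _ _) this
    exact_mod_cast hfin
  · -- egg-cut side
    refine le_sInf ?_
    rintro t ⟨c', ⟨hsym, hle, X₁, hX₁, X₂, hX₂, hint1, hint2, hcross⟩, hsig⟩
    have h1 := hmem X₁ hX₁
    have h2 := hmem X₂ hX₂
    have key : ∃ w : Σ i : Fin k, Fin (r i), w.1 ≤ ℓ ∧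
        a w.1 ≤ c' (Sum.inl ()) (Sum.inr w) := by
      by_contra hcon
      push_neg at hcon
      have hreachc : ∀ (X : Finset (Unit ⊕ Σ i : Fin k, Fin (r i))),
          (X = {Sum.inl ()} ∨ ∃ w : Σ i : Fin k, Fin (r i), w.1 ≤ ℓ ∧ X = {Sum.inr w}) →
          ∀ x ∈ X, ((bananaStar k a r).cutGraph c').Reachable (Sum.inl ()) x := by
        rintro X (rfl | ⟨w, hwℓ, rfl⟩) x hx
        · rw [Finset.mem_singleton] at hx
          subst hx
          exact Reachable.refl _
        · rw [Finset.mem_singleton] at hx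
          subst hx
          have hlt := hcon w hwℓ
          refine Adj.reachable (⟨by simp, ?_, ?_⟩ : _ ∧ _ ∧ _)
          · rw [show (bananaStar k a r).mul (Sum.inl ()) (Sum.inr w) = a w.1 from
              bs_mul_inl_inr w]
            exact hlt
          · rw [show (bananaStar k a r).mul (Sum.inr w) (Sum.inl ()) = a w.1 from
              bs_mul_inr_inl w, hsym]
            exact hlt
      have hX₁ne : X₁.Nonempty := by
        rcases h1 with rfl | ⟨w, _, rfl⟩ <;> exact ⟨_, Finset.mem_singleton_self _⟩
      have hX₂ne : X₂.Nonempty := by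
        rcases h2 with rfl | ⟨w, _, rfl⟩ <;> exact ⟨_, Finset.mem_singleton_self _⟩
      obtain ⟨x₁, hx₁⟩ := hX₁ne
      obtain ⟨x₂, hx₂⟩ := hX₂ne
      exact hcross x₁ hx₁ x₂ hx₂
        ((hreachc X₁ h1 x₁ hx₁).symm.trans (hreachc X₂ h2 x₂ hx₂))
    obtain ⟨w, hwℓ, hcw⟩ := key
    have haw : a ℓ ≤ a w.1 := hanti.antitone hwℓ
    have hsum2 : 2 * a ℓ ≤ ∑ u, ∑ v, c' u v := by
      have h2e := two_entries_le_sum c' (x := (Sum.inl () : Unit ⊕ Σ i : Fin k, Fin (r i)))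
        (y := Sum.inr w) (by simp)
      have he : c' (Sum.inl ()) (Sum.inr w) = c' (Sum.inr w) (Sum.inl ()) := hsym _ _
      omega
    have hat : ((a ℓ : ℕ) : ℕ∞) ≤ t := by
      induction t using ENat.recTopCoe with
      | top => exact le_top
      | coe n =>
        have hcast : ((∑ u, ∑ v, c' u v : ℕ) : ℕ∞) = ((2 * n : ℕ) : ℕ∞) := by
          rw [hsig]; push_cast; ring
        have hsign : ∑ u, ∑ v, c' u v = 2 * n := Nat.cast_injective hcast
        have : a ℓ ≤ n := by omega
        exact_mod_cast this
    exact le_trans (Nat.cast_le.mpr (min_le_left _ _)) hat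

end Aux3
open Multigraph in
/-- The scramble number of the banana star `S_{(a_1^{r_1}, …, a_k^{r_k})}`
(with `a_1 > a_2 > ⋯ > a_k ≥ 1` and all `r_i ≥ 1`) equals
`max_{1 ≤ ℓ ≤ k} min { a_ℓ, 1 + Σ_{i=1}^{ℓ} r_i }`. -/
theorem banana_star_scrambleNumber
    (k : ℕ) (hk : 0 < k) (a r : Fin k → ℕ) (hanti : StrictAnti a)
    (ha : ∀ i, 1 ≤ a i) (hr : ∀ i, 1 ≤ r i) :
    (Multigraph.bananaStar k a r).scrambleNumber =
      ((Finset.univ.sup fun ℓ : Fin k =>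
        min (a ℓ) (1 + ∑ i : Fin k, if i ≤ ℓ then r i else 0) : ℕ) : ℕ∞) := by
  classical
  apply le_antisymm
  · apply sSup_le
    rintro m ⟨S, hS, rfl⟩
    exact order_le_M hk ha S hS
  · obtain ⟨ℓ₀, -, hℓ₀⟩ := Finset.exists_mem_eq_sup (univ : Finset (Fin k))
      ⟨⟨0, hk⟩, mem_univ _⟩
      (fun ℓ : Fin k => min (a ℓ) (1 + ∑ i : Fin k, if i ≤ ℓ then r i else 0))
    apply le_sSup
    refine ⟨insert ({Sum.inl ()} : Finset (Unit ⊕ Σ i : Fin k, Fin (r i)))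
      ((univ.filter fun w : Σ i : Fin k, Fin (r i) => w.1 ≤ ℓ₀).image
        fun w => ({Sum.inr w} : Finset (Unit ⊕ Σ i : Fin k, Fin (r i)))),
      scramble_S₀ ℓ₀, ?_⟩
    refine le_antisymm (order_le_M hk ha _ (scramble_S₀ ℓ₀)) ?_
    rw [hℓ₀]
    exact lower_bound hanti ha ℓ₀
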